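/- Let g be the two-dimensional real Lie algebra with basis e₁, e₂ and bracket ⁅e₁,e₂⁆ = e₂ (the Lie algebra of Aff(ℝ)). Then there exist no inner product ⟨·,·⟩ on g and bilinear product · on g satisfying, for all x,y,z ∈ g: x·y − y·x = ⁅x,y⁆, ⟨x·y, z⟩ + ⟨y, x·z⟩ = 0, and L_⁅x,y⁆ = L_x ∘ L_y − L_y ∘ L_x, where L_x(y) = x·y. (Equivalently: Aff(ℝ) admits no left-invariant flat Riemannian metric.) -/

import Mathlib

/-- The Lie algebra `aff(ℝ)` of `Aff(ℝ)` (basis `e₁,e₂` with `⁅e₁,e₂⁆ = e₂`)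
carries no inner product together with a flat Levi-Civita product; equivalently,
`Aff(ℝ)` admits no left-invariant flat Riemannian metric. -/
theorem aff_line_no_flat_riemannian
    (g : Type*) [LieRing g] [LieAlgebra ℝ g]
    (b : Module.Basis (Fin 2) ℝ g) (hbr : ⁅b 0, b 1⁆ = b 1) :
    ¬ ∃ (B : LinearMap.BilinForm ℝ g) (P : g →ₗ[ℝ] g →ₗ[ℝ] g),
        (∀ x y : g, B x y = B y x) ∧
        (∀ x : g, x ≠ 0 → 0 < B x x) ∧
        (∀ x y : g, P x y - P y x = ⁅x, y⁆) ∧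
        (∀ x y z : g, B (P x y) z + B y (P x z) = 0) ∧
        (∀ x y : g, P ⁅x, y⁆ = P x ∘ₗ P y - P y ∘ₗ P x) := by
  rintro ⟨B, P, hsymm, hpos, htor, hskew, hfl⟩
  set e : g := b 0 with he
  set f : g := b 1 with hf
  have hfne : f ≠ 0 := b.ne_zero 1
  have hr : 0 < B f f := hpos f hfne
  -- nondegeneracy from positivity
  have key : ∀ v : g, B v e = 0 → B v f = 0 → v = 0 := by
    intro v h0 h1
    by_contra hv
    have hrepr : v = b.repr v 0 • e + b.repr v 1 • f := by
      have h2 := b.sum_repr v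
      rw [Fin.sum_univ_two] at h2
      exact h2.symm
    have hz : B v v = 0 := by
      calc B v v = B v (b.repr v 0 • e + b.repr v 1 • f) := by rw [← hrepr]
        _ = 0 := by simp [h0, h1]
    linarith [hpos v hv]
  set a : g := P e e with ha
  set c : g := P e f with hc
  set d : g := P f e with hd
  set g' : g := P f f with hg'
  -- skew-adjointness relations
  have h1 : B a e = 0 := by have h := hskew e e e; have hs := hsymm e a; linarith
  have h2 : B c f = 0 := by have h := hskew e f f; have hs := hsymm f c; linarith
  have h3 : B d e = 0 := by have h := hskew f e e; have hs := hsymm e d; linarith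
  have h4 : B g' f = 0 := by have h := hskew f f f; have hs := hsymm f g'; linarith
  have h5 : B a f = - B c e := by
    have h := hskew e e f; have hs := hsymm e c; linarith
  have h6 : B d f = - B g' e := by
    have h := hskew f e f; have hs := hsymm e g'; linarith
  -- torsion relations
  have ht : c - d = f := by have h := htor e f; rwa [hbr] at h
  have hce : B c e = B e f := by
    have h := congrArg (fun v => B v e) ht
    simp only [map_sub, LinearMap.sub_apply] at h
    have hs := hsymm f e
    linarith
  have hdf : B d f = - B f f := by
    have h := congrArg (fun v => B v f) ht
    simp only [map_sub, LinearMap.sub_apply] at h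
    linarith
  have hge : B g' e = B f f := by linarith
  have haf : B a f = - B e f := by linarith
  -- proportionality of the skew operators
  have hra : (B f f) • a = (B e f) • d := by
    have h0 : B ((B f f) • a - (B e f) • d) e = 0 := by
      simp [map_sub, map_smul, h1, h3]
    have h1' : B ((B f f) • a - (B e f) • d) f = 0 := by
      simp only [map_sub, map_smul, LinearMap.sub_apply, LinearMap.smul_apply,
        smul_eq_mul, haf, hdf]
      ring
    exact sub_eq_zero.mp (key _ h0 h1')
  have hrc : (B f f) • c = (B e f) • g' := by
    have h0 : B ((B f f) • c - (B e f) • g') e = 0 := by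
      simp only [map_sub, map_smul, LinearMap.sub_apply, LinearMap.smul_apply,
        smul_eq_mul, hce, hge]
      ring
    have h1' : B ((B f f) • c - (B e f) • g') f = 0 := by
      simp [map_sub, map_smul, h2, h4]
    exact sub_eq_zero.mp (key _ h0 h1')
  -- flatness relation
  have hflf : g' = P e g' - P f c := by
    have h := hfl e f
    rw [hbr] at h
    have h2 := LinearMap.congr_fun h f
    simpa using h2
  have hmain : B f f = - B g' a + B c d := by
    have h := congrArg (fun v => B v e) hflf
    simp only [map_sub, LinearMap.sub_apply] at h
    have hA := hskew e g' e
    have hB := hskew f c e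
    have hsA := hsymm g' a
    have hsB := hsymm c d
    -- B (P e g') e = - B g' a,  B (P f c) e = - B c d
    have hsA' := hsymm g' (P e e)
    have hsB' := hsymm c (P f e)
    linarith
  -- combine
  have e1 : B f f * B c d = B e f * B g' d := by
    have h := congrArg (fun v => B v d) hrc
    simp only [map_smul, LinearMap.smul_apply, smul_eq_mul] at h
    exact h
  have e2 : B f f * B g' a = B e f * B g' d := by
    have h := congrArg (fun v => B g' v) hra
    simp only [map_smul, smul_eq_mul] at h
    exact h
  have hsq : B f f * B f f = 0 := by
    have h' : B f f * B f f = B f f * (- B g' a + B c d) := by rw [← hmain]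
    rw [mul_add, mul_neg, e1, e2] at h'
    linarith
  exact absurd hsq (ne_of_gt (mul_pos hr hr))
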